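/- (Dilaton and string equations for p.) For every k ∈ ℕ, every n ≥ 1 and all m_1,…,m_n ∈ ℚ, the dilaton equation holds: p_k(m_1,…,m_n,1) − p_k(m_1,…,m_n,0) = p_{k−1}(m_1,…,m_n) (with p_{−1} of several variables := 0). Moreover, for every k ∈ ℕ and all nonnegative integers m_1,…,m_n, the string equation holds: (k+1)·p_{k+1}(m_1,…,m_n) = (m_1+⋯+m_n−k−1)·p_k(m_1,…,m_n) + Σ_{i=1}^n Σ_{j=1}^{m_i−1} 2j·p_k(m_1,…,m_{i−1},j,m_{i+1},…,m_n). -/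

import Mathlib

/-- Generalized binomial coefficient `binom(x,k) = x(x-1)⋯(x-k+1)/k!`. -/
def qbinom (x : ℚ) (k : ℕ) : ℚ := (∏ i ∈ Finset.range k, (x - i)) / (Nat.factorial k)

/-- `p_k(m) = binom(m-1,k)·binom(m+k,k)`. -/
def pPoly (k : ℕ) (m : ℚ) : ℚ := qbinom (m - 1) k * qbinom (m + k) k

/-- `q_k(m) = binom(m,k)·binom(m+k-1,k)`. -/
def qPoly (k : ℕ) (m : ℚ) : ℚ := qbinom m k * qbinom (m + k - 1) k

/-- Multivariate `p_k(m_1,…,m_n) = Σ_{k_1+⋯+k_n=k} p_{k_1}(m_1)·q_{k_2}(m_2)⋯q_{k_n}(m_n)`. -/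
def pMulti (k n : ℕ) (m : Fin n → ℚ) : ℚ :=
  ∑ f ∈ Finset.Nat.antidiagonalTuple n k,
    ∏ i : Fin n, (if i.val = 0 then pPoly (f i) (m i) else qPoly (f i) (m i))


section Aux
open Finset
lemma factq_ne (k : ℕ) : ((Nat.factorial k : ℚ)) ≠ 0 := by
  exact_mod_cast Nat.factorial_ne_zero k

/-- shift lemma -/
lemma prodL (k : ℕ) (x : ℚ) :
    (x + 1) * ∏ i ∈ range k, (x - i) = (∏ i ∈ range k, (x + 1 - i)) * (x + 1 - k) := by
  have h1 : ∏ i ∈ range (k+1), (x + 1 - i) = (x + 1) * ∏ i ∈ range k, (x - i) := by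
    rw [Finset.prod_range_succ']
    rw [mul_comm]
    congr 1
    · push_cast; ring
    · apply Finset.prod_congr rfl
      intro i _
      push_cast
      ring
  have h2 : ∏ i ∈ range (k+1), (x + 1 - i) = (∏ i ∈ range k, (x + 1 - i)) * (x + 1 - k) := by
    rw [Finset.prod_range_succ]
  rw [← h1, h2]

lemma R1 (b : ℕ) (m : ℚ) :
    ((b:ℚ)+1)^2 * qPoly (b+1) m = (m^2 - b^2) * qPoly b m := by
  unfold qPoly qbinom
  have e1 : ∏ i ∈ range (b+1), (m - i) = (∏ i ∈ range b, (m - i)) * (m - b) :=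
    Finset.prod_range_succ _ _
  have e2 : ∏ i ∈ range (b+1), (m + (b+1:ℕ) - 1 - i)
      = (m + (b:ℚ)) * ∏ i ∈ range b, (m + (b:ℕ) - 1 - i) := by
    rw [Finset.prod_range_succ']
    rw [mul_comm]
    congr 1
    · push_cast; ring
    · apply Finset.prod_congr rfl
      intro i _; push_cast; ring
  rw [e1, e2]
  have hf : (Nat.factorial (b+1) : ℚ) = ((b:ℚ)+1) * Nat.factorial b := by
    push_cast [Nat.factorial_succ]; ring
  rw [hf]
  field_simp
  push_cast
  ring

lemma R2 (k : ℕ) (m : ℚ) :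
    ((k:ℚ)+1)^2 * pPoly (k+1) m = (m^2 - ((k:ℚ)+1)^2) * pPoly k m := by
  unfold pPoly qbinom
  have e1 : ∏ i ∈ range (k+1), (m - 1 - i) = (∏ i ∈ range k, (m - 1 - i)) * (m - 1 - k) :=
    Finset.prod_range_succ _ _
  have e2 : ∏ i ∈ range (k+1), (m + (k+1:ℕ) - i)
      = (m + (k:ℚ) + 1) * ∏ i ∈ range k, (m + (k:ℕ) - i) := by
    rw [Finset.prod_range_succ']
    rw [mul_comm]
    congr 1
    · push_cast; ring
    · apply Finset.prod_congr rfl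
      intro i _; push_cast; ring
  rw [e1, e2]
  have hf : (Nat.factorial (k+1) : ℚ) = ((k:ℚ)+1) * Nat.factorial k := by
    push_cast [Nat.factorial_succ]; ring
  rw [hf]
  field_simp
  push_cast
  ring

lemma R3q (b : ℕ) (m : ℚ) :
    m * (m + 1 - b) * qPoly b (m+1) = (m+1) * (m + b) * qPoly b m := by
  unfold qPoly qbinom
  set A := ∏ i ∈ range b, (m - (i:ℚ)) with hA
  set B := ∏ i ∈ range b, (m + 1 - (i:ℚ)) with hB
  set C := ∏ i ∈ range b, (m + (b:ℚ) - 1 - i) with hC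
  set D := ∏ i ∈ range b, (m + (b:ℚ) - i) with hD
  have eD : ∏ i ∈ range b, (m + 1 + (b:ℚ) - 1 - i) = D := by
    apply Finset.prod_congr rfl; intro i _; ring
  rw [eD]
  have h1 : (m + 1) * A = B * (m + 1 - b) := prodL b m
  have h2 : (m + (b:ℚ)) * C = D * m := by
    have := prodL b (m + (b:ℚ) - 1)
    have eB : ∏ i ∈ range b, (m + (b:ℚ) - 1 + 1 - i) = D := by
      apply Finset.prod_congr rfl; intro i _; ring
    rw [eB] at this
    calc (m + (b:ℚ)) * C = (m + (b:ℚ) - 1 + 1) * C := by ring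
      _ = D * (m + (b:ℚ) - 1 + 1 - b) := this
      _ = D * m := by ring
  have key : m * (m + 1 - b) * (B * D) = (m+1) * (m + b) * (A * C) := by
    calc m * (m + 1 - b) * (B * D) = (B * (m+1-b)) * (D * m) := by ring
      _ = ((m+1) * A) * ((m + (b:ℚ)) * C) := by rw [h1, h2]
      _ = (m+1) * (m + b) * (A * C) := by ring
  have hf := factq_ne b
  field_simp
  linear_combination key

lemma R3p (k : ℕ) (m : ℚ) :
    m * (m + k + 1) * pPoly k m = (m+1) * (m - k) * pPoly k (m+1) := by
  unfold pPoly qbinom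
  set A := ∏ i ∈ range k, (m - 1 - (i:ℚ)) with hA
  set D := ∏ i ∈ range k, (m + (k:ℚ) - i) with hD
  set B := ∏ i ∈ range k, (m - (i:ℚ)) with hB
  set E := ∏ i ∈ range k, (m + (k:ℚ) + 1 - i) with hE
  have e1 : ∏ i ∈ range k, (m + 1 - 1 - (i:ℚ)) = B := by
    apply Finset.prod_congr rfl; intro i _; ring
  have e2 : ∏ i ∈ range k, (m + 1 + (k:ℚ) - i) = E := by
    apply Finset.prod_congr rfl; intro i _; ring
  rw [e1, e2]
  have h1 : m * A = B * (m - k) := by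
    have := prodL k (m - 1)
    have eB : ∏ i ∈ range k, (m - 1 + 1 - (i:ℚ)) = B := by
      apply Finset.prod_congr rfl; intro i _; ring
    rw [eB] at this
    calc m * A = (m - 1 + 1) * A := by ring
      _ = B * (m - 1 + 1 - k) := this
      _ = B * (m - k) := by ring
  have h2 : (m + (k:ℚ) + 1) * D = E * (m + 1) := by
    have := prodL k (m + (k:ℚ))
    have eE : ∏ i ∈ range k, (m + (k:ℚ) + 1 - i) = E := rfl
    calc (m + (k:ℚ) + 1) * D = (m + (k:ℚ) + 1) * ∏ i ∈ range k, (m + (k:ℚ) - i) := rfl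
      _ = E * (m + (k:ℚ) + 1 - k) := this
      _ = E * (m + 1) := by ring
  have key : m * (m + k + 1) * (A * D) = (m+1) * (m - k) * (B * E) := by
    calc m * (m + k + 1) * (A * D) = (m * A) * ((m + (k:ℚ) + 1) * D) := by ring
      _ = (B * (m - k)) * (E * (m+1)) := by rw [h1, h2]
      _ = (m+1) * (m - k) * (B * E) := by ring
  have hf := factq_ne k
  field_simp
  linear_combination key

lemma qPoly_zero (b : ℕ) : qPoly b 0 = if b = 0 then 1 else 0 := by
  rcases b with _ | b
  · simp [qPoly, qbinom]
  · simp only [Nat.succ_ne_zero, if_false]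
    unfold qPoly qbinom
    have : ∏ i ∈ range (b+1), ((0:ℚ) - i) = 0 := by
      apply Finset.prod_eq_zero (Finset.mem_range.2 (Nat.succ_pos b))
      simp
    rw [this]
    simp

lemma qPoly_one (b : ℕ) : qPoly b 1 = if b ≤ 1 then 1 else 0 := by
  match b with
  | 0 => simp [qPoly, qbinom]
  | 1 => norm_num [qPoly, qbinom]
  | (b+2) =>
    have hb : ¬ (b + 2 ≤ 1) := by omega
    simp only [hb, if_false]
    unfold qPoly qbinom
    have : ∏ i ∈ range (b+2), ((1:ℚ) - i) = 0 := by
      exact Finset.prod_eq_zero (i := 1) (by simp) (by norm_num)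
    rw [this]
    simp

lemma pPoly_one (k : ℕ) : pPoly k 1 = if k = 0 then 1 else 0 := by
  rcases k with _ | k
  · simp [pPoly, qbinom]
  · simp only [Nat.succ_ne_zero, if_false]
    unfold pPoly qbinom
    have : ∏ i ∈ range (k+1), ((1:ℚ) - 1 - i) = 0 := by
      apply Finset.prod_eq_zero (Finset.mem_range.2 (Nat.succ_pos k))
      simp
    rw [this]
    simp

/-- closed form for the weighted sum of `pPoly` -/
lemma Sp (k : ℕ) : ∀ m : ℕ, ((k:ℚ)+1) * ∑ j ∈ Finset.Ico 1 m, (2*(j:ℚ)) * pPoly k j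
    = (m:ℚ) * ((m:ℚ) - k - 1) * pPoly k m := by
  intro m
  induction m with
  | zero => simp
  | succ m ih =>
    rcases Nat.eq_zero_or_pos m with hm | hm
    · subst hm
      simp only [Finset.Ico_self, Finset.sum_empty, mul_zero]
      simp only [show (0+1:ℕ) = 1 from rfl, Nat.cast_one]
      have h := R3p k 0
      rw [show (0:ℚ)+1 = 1 from by norm_num] at h
      linear_combination h
    · rw [Finset.sum_Ico_succ_top hm]
      push_cast
      linear_combination ih + R3p k (m:ℚ)

/-- string equation for `pPoly`, one variable -/
lemma Pstring1 (k : ℕ) (m : ℕ) : ((k:ℚ)+1) * pPoly (k+1) m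
    = ((m:ℚ) - k - 1) * pPoly k m + ∑ j ∈ Finset.Ico 1 m, (2*(j:ℚ)) * pPoly k j := by
  have hne : ((k:ℚ)+1) ≠ 0 := by positivity
  apply mul_left_cancel₀ hne
  linear_combination R2 k (m:ℚ) - Sp k m

/-- string equation for `qPoly`, one variable -/
lemma Qstring1 (b : ℕ) : ∀ m : ℕ, ((b:ℚ)+1) * qPoly (b+1) m
    = ((m:ℚ) - b) * qPoly b m + ∑ j ∈ Finset.Ico 1 m, (2*(j:ℚ)) * qPoly b j := by
  have hne : ((b:ℚ)+1) ≠ 0 := by positivity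
  intro m
  induction m with
  | zero =>
    simp only [Nat.cast_zero]
    rw [Finset.Ico_eq_empty (by omega), Finset.sum_empty, qPoly_zero, qPoly_zero]
    rcases Nat.eq_zero_or_pos b with hb | hb
    · subst hb; norm_num
    · rw [if_neg (by omega), if_neg (by omega)]; ring
  | succ m ih =>
    apply mul_left_cancel₀ hne
    rcases Nat.eq_zero_or_pos m with hm | hm
    · subst hm
      simp only [Finset.Ico_self, Finset.sum_empty, add_zero,
        show (0+1:ℕ) = 1 from rfl, Nat.cast_one]
      linear_combination R1 b 1
    · rw [Finset.sum_Ico_succ_top hm]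
      push_cast
      linear_combination R1 b ((m:ℚ)+1) - R1 b (m:ℚ) + R3q b (m:ℚ) + ((b:ℚ)+1) * ih

lemma tail_snoc {n : ℕ} (v : Fin (n+1) → ℚ) (x : ℚ) :
    Fin.tail (α := fun _ => ℚ) (Fin.snoc v x) = Fin.snoc (α := fun _ => ℚ) (Fin.tail v) x := by
  funext i
  simp only [Fin.tail]
  induction i using Fin.lastCases with
  | last =>
    rw [Fin.succ_last, Fin.snoc_last, Fin.snoc_last]
  | cast j =>
    rw [Fin.succ_castSucc, Fin.snoc_castSucc, Fin.snoc_castSucc]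
    rfl

/-- splitting off the first coordinate of an antidiagonal-tuple sum -/
lemma conv_cons (n k : ℕ) (g : Fin (n+1) → ℕ → ℚ) :
    ∑ f ∈ Finset.Nat.antidiagonalTuple (n+1) k, ∏ i, g i (f i)
      = ∑ ab ∈ Finset.HasAntidiagonal.antidiagonal k,
          g 0 ab.1 * ∑ f ∈ Finset.Nat.antidiagonalTuple n ab.2, ∏ i, g i.succ (f i) := by
  rw [eq_comm]
  simp_rw [Finset.mul_sum]
  rw [Finset.sum_sigma']
  refine Finset.sum_bij' (i := fun x _ => Fin.cons x.1.1 x.2)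
    (j := fun f _ => ⟨(f 0, ∑ i : Fin n, f i.succ), Fin.tail f⟩) ?_ ?_ ?_ ?_ ?_
  · rintro ⟨⟨a1, a2⟩, f⟩ ha
    simp only [Finset.mem_sigma, Finset.HasAntidiagonal.mem_antidiagonal,
      Finset.Nat.mem_antidiagonalTuple] at ha ⊢
    rw [Fin.sum_univ_succ, Fin.cons_zero]
    simp only [Fin.cons_succ]
    rw [ha.2, ha.1]
  · intro f hf
    simp only [Finset.mem_sigma, Finset.HasAntidiagonal.mem_antidiagonal,
      Finset.Nat.mem_antidiagonalTuple] at hf ⊢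
    refine ⟨?_, rfl⟩
    rw [← hf, Fin.sum_univ_succ]
  · rintro ⟨⟨a1, a2⟩, f⟩ ha
    simp only [Finset.mem_sigma, Finset.HasAntidiagonal.mem_antidiagonal,
      Finset.Nat.mem_antidiagonalTuple] at ha
    simp [Fin.cons_succ, Fin.tail_cons, ha.2]
  · intro f hf
    simp only
    exact Fin.cons_self_tail f
  · rintro ⟨⟨a1, a2⟩, f⟩ ha
    simp only
    rw [Fin.prod_univ_succ, Fin.cons_zero]
    simp only [Fin.cons_succ]

/-- pure-q multivariate polynomial -/
def Qm (k n : ℕ) (v : Fin n → ℚ) : ℚ :=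
  ∑ f ∈ Finset.Nat.antidiagonalTuple n k, ∏ i, qPoly (f i) (v i)

lemma Qm_nil (k : ℕ) (v : Fin 0 → ℚ) : Qm k 0 v = if k = 0 then 1 else 0 := by
  rcases k with _ | k
  · rw [Qm, Finset.Nat.antidiagonalTuple_zero_zero]
    simp
  · rw [Qm, Finset.Nat.antidiagonalTuple_zero_succ]
    simp

lemma Qm_cons (k n : ℕ) (v : Fin (n+1) → ℚ) :
    Qm k (n+1) v = ∑ ab ∈ Finset.HasAntidiagonal.antidiagonal k,
      qPoly ab.1 (v 0) * Qm ab.2 n (Fin.tail v) := by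
  exact conv_cons n k (fun i j => qPoly j (v i))

lemma pMulti_cons (k n : ℕ) (m : Fin (n+1) → ℚ) :
    pMulti k (n+1) m = ∑ ab ∈ Finset.HasAntidiagonal.antidiagonal k,
      pPoly ab.1 (m 0) * Qm ab.2 n (Fin.tail m) := by
  rw [pMulti, conv_cons n k (fun i j => if i.val = 0 then pPoly j (m i) else qPoly j (m i))]
  apply Finset.sum_congr rfl
  intro ab _
  simp [Qm, Fin.val_succ, Fin.tail]

lemma snoc_zero' {n : ℕ} (v : Fin (n+1) → ℚ) (x : ℚ) :
    (Fin.snoc v x : Fin (n+2) → ℚ) 0 = v 0 := by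
  have h : (Fin.snoc v x : Fin (n+2) → ℚ) (Fin.castSucc 0) = v 0 := Fin.snoc_castSucc (α := fun _ => ℚ) x v 0
  simpa using h

lemma Qm_one_var (k : ℕ) (w : Fin 1 → ℚ) : Qm k 1 w = qPoly k (w 0) := by
  rw [Qm, Finset.Nat.antidiagonalTuple_one]
  simp

/-- dilaton equation for `Qm` -/
lemma DQ (n : ℕ) : ∀ (k : ℕ) (v : Fin n → ℚ),
    Qm k (n+1) (Fin.snoc v 1) - Qm k (n+1) (Fin.snoc v 0)
      = if k = 0 then 0 else Qm (k-1) n v := by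
  induction n with
  | zero =>
    intro k v
    rw [Qm_one_var, Qm_one_var, Qm_nil]
    have h1 : (Fin.snoc v (1:ℚ) : Fin 1 → ℚ) 0 = 1 := Fin.snoc_last _ _
    have h0 : (Fin.snoc v (0:ℚ) : Fin 1 → ℚ) 0 = 0 := Fin.snoc_last _ _
    rw [h1, h0, qPoly_one, qPoly_zero]
    rcases k with _ | _ | k <;> norm_num
  | succ n ih =>
    intro k v
    rw [Qm_cons, Qm_cons, snoc_zero', snoc_zero', tail_snoc, tail_snoc,
      ← Finset.sum_sub_distrib]
    have hcong : ∀ ab ∈ Finset.HasAntidiagonal.antidiagonal k,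
        qPoly ab.1 (v 0) * Qm ab.2 (n+1) (Fin.snoc (Fin.tail v) 1)
          - qPoly ab.1 (v 0) * Qm ab.2 (n+1) (Fin.snoc (Fin.tail v) 0)
        = qPoly ab.1 (v 0) *
            (if ab.2 = 0 then 0 else Qm (ab.2 - 1) n (Fin.tail v)) := by
      intro ab _
      rw [← mul_sub, ih]
    rw [Finset.sum_congr rfl hcong]
    rcases k with _ | k
    · simp [Finset.Nat.antidiagonal_zero]
    · simp only [Nat.succ_ne_zero, if_false]
      rw [Finset.Nat.sum_antidiagonal_succ', Qm_cons]
      simp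
/-- dilaton equation for `pMulti` -/
lemma DP (k n : ℕ) (m : Fin (n+1) → ℚ) :
    pMulti k (n+2) (Fin.snoc m 1) - pMulti k (n+2) (Fin.snoc m 0)
      = if k = 0 then 0 else pMulti (k-1) (n+1) m := by
  rw [pMulti_cons, pMulti_cons, snoc_zero', snoc_zero', tail_snoc, tail_snoc,
    ← Finset.sum_sub_distrib]
  have hcong : ∀ ab ∈ Finset.HasAntidiagonal.antidiagonal k,
      pPoly ab.1 (m 0) * Qm ab.2 (n+1) (Fin.snoc (Fin.tail m) 1)
        - pPoly ab.1 (m 0) * Qm ab.2 (n+1) (Fin.snoc (Fin.tail m) 0)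
      = pPoly ab.1 (m 0) *
          (if ab.2 = 0 then 0 else Qm (ab.2 - 1) n (Fin.tail m)) := by
    intro ab _
    rw [← mul_sub, DQ]
  rw [Finset.sum_congr rfl hcong]
  rcases k with _ | k
  · simp [Finset.Nat.antidiagonal_zero]
  · simp only [Nat.succ_ne_zero, if_false]
    rw [Finset.Nat.sum_antidiagonal_succ', pMulti_cons]
    simp

/-- string equation for `Qm` -/
lemma QSaux (n : ℕ) : ∀ (k : ℕ) (vN : Fin n → ℕ) (vQ : Fin n → ℚ),
    (∀ i, vQ i = (vN i : ℚ)) →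
    ((k:ℚ)+1) * Qm (k+1) n vQ
      = ((∑ i, vQ i) - k) * Qm k n vQ
        + ∑ i, ∑ j ∈ Finset.Ico 1 (vN i), 2*(j:ℚ) * Qm k n (Function.update vQ i (j:ℚ)) := by
  induction n with
  | zero =>
    intro k vN vQ hv
    rw [Qm_nil, Qm_nil]
    rcases k with _ | k <;> simp
  | succ n ih =>
    intro k vN vQ hv
    have hu0 : ∀ x : ℚ, Qm k (n+1) (Function.update vQ 0 x)
        = ∑ p ∈ Finset.HasAntidiagonal.antidiagonal k, qPoly p.1 x * Qm p.2 n (Fin.tail vQ) := by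
      intro x
      rw [Qm_cons, Function.update_self, Fin.tail_update_zero]
    have hus : ∀ (s : Fin n) (x : ℚ), Qm k (n+1) (Function.update vQ s.succ x)
        = ∑ p ∈ Finset.HasAntidiagonal.antidiagonal k,
            qPoly p.1 (vQ 0) * Qm p.2 n (Function.update (Fin.tail vQ) s x) := by
      intro s x
      rw [Qm_cons, Fin.tail_update_succ,
        Function.update_of_ne (Fin.succ_ne_zero s).symm]
    rw [Qm_cons, Qm_cons (k := k) (v := vQ), Fin.sum_univ_succ (f := vQ),
      Fin.sum_univ_succ (f := fun i => ∑ j ∈ Finset.Ico 1 (vN i),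
        2*(j:ℚ) * Qm k (n+1) (Function.update vQ i (j:ℚ)))]
    simp only [hu0, hus]
    rw [Finset.mul_sum]
    have e1 : ∀ p ∈ Finset.HasAntidiagonal.antidiagonal (k+1),
        ((k:ℚ)+1) * (qPoly p.1 (vQ 0) * Qm p.2 n (Fin.tail vQ))
        = (p.1:ℚ) * (qPoly p.1 (vQ 0) * Qm p.2 n (Fin.tail vQ))
          + (p.2:ℚ) * (qPoly p.1 (vQ 0) * Qm p.2 n (Fin.tail vQ)) := by
      intro p hp
      rw [Finset.HasAntidiagonal.mem_antidiagonal] at hp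
      have h' : (p.1:ℚ) + (p.2:ℚ) = (k:ℚ) + 1 := by exact_mod_cast congrArg (Nat.cast : ℕ → ℚ) hp
      linear_combination (-(qPoly p.1 (vQ 0) * Qm p.2 n (Fin.tail vQ))) * h'
    rw [Finset.sum_congr rfl e1, Finset.sum_add_distrib,
      Finset.Nat.sum_antidiagonal_succ
        (f := fun p => (p.1:ℚ) * (qPoly p.1 (vQ 0) * Qm p.2 n (Fin.tail vQ))),
      Finset.Nat.sum_antidiagonal_succ'
        (f := fun p => (p.2:ℚ) * (qPoly p.1 (vQ 0) * Qm p.2 n (Fin.tail vQ)))]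
    simp only [Nat.cast_zero, zero_mul, zero_add, add_zero]
    have eA : ∀ p ∈ Finset.HasAntidiagonal.antidiagonal k,
        ((p.1+1:ℕ):ℚ) * (qPoly (p.1+1) (vQ 0) * Qm p.2 n (Fin.tail vQ))
        = ((vQ 0 - p.1) * qPoly p.1 (vQ 0)
            + ∑ j ∈ Finset.Ico 1 (vN 0), 2*(j:ℚ) * qPoly p.1 (j:ℚ)) * Qm p.2 n (Fin.tail vQ) := by
      intro p _
      rw [hv 0]
      push_cast
      linear_combination (Qm p.2 n (Fin.tail vQ)) * Qstring1 p.1 (vN 0)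
    have eB : ∀ p ∈ Finset.HasAntidiagonal.antidiagonal k,
        ((p.2+1:ℕ):ℚ) * (qPoly p.1 (vQ 0) * Qm (p.2+1) n (Fin.tail vQ))
        = qPoly p.1 (vQ 0) * (((∑ s : Fin n, vQ s.succ) - p.2) * Qm p.2 n (Fin.tail vQ)
            + ∑ s : Fin n, ∑ j ∈ Finset.Ico 1 (vN s.succ),
                2*(j:ℚ) * Qm p.2 n (Function.update (Fin.tail vQ) s (j:ℚ))) := by
      intro p _
      have h := ih p.2 (fun s => vN s.succ) (Fin.tail vQ) (fun i => hv i.succ)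
      have hss : (∑ i : Fin n, Fin.tail vQ i) = ∑ s : Fin n, vQ s.succ := rfl
      rw [hss] at h
      push_cast
      linear_combination (qPoly p.1 (vQ 0)) * h
    rw [Finset.sum_congr rfl eA, Finset.sum_congr rfl eB]
    have hC : (∑ j ∈ Finset.Ico 1 (vN 0), 2*(j:ℚ) *
          ∑ p ∈ Finset.HasAntidiagonal.antidiagonal k, qPoly p.1 (j:ℚ) * Qm p.2 n (Fin.tail vQ))
        = ∑ p ∈ Finset.HasAntidiagonal.antidiagonal k,
            (∑ j ∈ Finset.Ico 1 (vN 0), 2*(j:ℚ) * qPoly p.1 (j:ℚ)) * Qm p.2 n (Fin.tail vQ) := by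
      simp_rw [Finset.mul_sum]
      rw [Finset.sum_comm]
      refine Finset.sum_congr rfl fun p _ => ?_
      rw [Finset.sum_mul]
      exact Finset.sum_congr rfl fun j _ => by ring
    have hD : (∑ s : Fin n, ∑ j ∈ Finset.Ico 1 (vN s.succ), 2*(j:ℚ) *
          ∑ p ∈ Finset.HasAntidiagonal.antidiagonal k, qPoly p.1 (vQ 0) * Qm p.2 n (Function.update (Fin.tail vQ) s (j:ℚ)))
        = ∑ p ∈ Finset.HasAntidiagonal.antidiagonal k, qPoly p.1 (vQ 0) *
            ∑ s : Fin n, ∑ j ∈ Finset.Ico 1 (vN s.succ),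
              2*(j:ℚ) * Qm p.2 n (Function.update (Fin.tail vQ) s (j:ℚ)) := by
      simp_rw [Finset.mul_sum]
      rw [Finset.sum_congr rfl (fun s (_ : s ∈ Finset.univ) => Finset.sum_comm), Finset.sum_comm]
      refine Finset.sum_congr rfl fun p _ => Finset.sum_congr rfl fun s _ =>
        Finset.sum_congr rfl fun j _ => by ring
    rw [hC, hD, Finset.mul_sum, ← Finset.sum_add_distrib, ← Finset.sum_add_distrib, ← Finset.sum_add_distrib]
    refine Finset.sum_congr rfl fun p hp => ?_
    rw [Finset.HasAntidiagonal.mem_antidiagonal] at hp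
    have h' : (p.1:ℚ) + (p.2:ℚ) = (k:ℚ) := by exact_mod_cast congrArg (Nat.cast : ℕ → ℚ) hp
    linear_combination (-(qPoly p.1 (vQ 0) * Qm p.2 n (Fin.tail vQ))) * h'

/-- string equation for `pMulti` -/
lemma PSaux (n : ℕ) (k : ℕ) (vN : Fin (n+1) → ℕ) (vQ : Fin (n+1) → ℚ)
    (hv : ∀ i, vQ i = (vN i : ℚ)) :
    ((k:ℚ)+1) * pMulti (k+1) (n+1) vQ
      = ((∑ i, vQ i) - k - 1) * pMulti k (n+1) vQ
        + ∑ i, ∑ j ∈ Finset.Ico 1 (vN i), 2*(j:ℚ) * pMulti k (n+1) (Function.update vQ i (j:ℚ)) := by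
    have ih := QSaux n
    have hu0 : ∀ x : ℚ, pMulti k (n+1) (Function.update vQ 0 x)
        = ∑ p ∈ Finset.HasAntidiagonal.antidiagonal k, pPoly p.1 x * Qm p.2 n (Fin.tail vQ) := by
      intro x
      rw [pMulti_cons, Function.update_self, Fin.tail_update_zero]
    have hus : ∀ (s : Fin n) (x : ℚ), pMulti k (n+1) (Function.update vQ s.succ x)
        = ∑ p ∈ Finset.HasAntidiagonal.antidiagonal k,
            pPoly p.1 (vQ 0) * Qm p.2 n (Function.update (Fin.tail vQ) s x) := by
      intro s x
      rw [pMulti_cons, Fin.tail_update_succ,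
        Function.update_of_ne (Fin.succ_ne_zero s).symm]
    rw [pMulti_cons, pMulti_cons (k := k) (m := vQ), Fin.sum_univ_succ (f := vQ),
      Fin.sum_univ_succ (f := fun i => ∑ j ∈ Finset.Ico 1 (vN i),
        2*(j:ℚ) * pMulti k (n+1) (Function.update vQ i (j:ℚ)))]
    simp only [hu0, hus]
    rw [Finset.mul_sum]
    have e1 : ∀ p ∈ Finset.HasAntidiagonal.antidiagonal (k+1),
        ((k:ℚ)+1) * (pPoly p.1 (vQ 0) * Qm p.2 n (Fin.tail vQ))
        = (p.1:ℚ) * (pPoly p.1 (vQ 0) * Qm p.2 n (Fin.tail vQ))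
          + (p.2:ℚ) * (pPoly p.1 (vQ 0) * Qm p.2 n (Fin.tail vQ)) := by
      intro p hp
      rw [Finset.HasAntidiagonal.mem_antidiagonal] at hp
      have h' : (p.1:ℚ) + (p.2:ℚ) = (k:ℚ) + 1 := by exact_mod_cast congrArg (Nat.cast : ℕ → ℚ) hp
      linear_combination (-(pPoly p.1 (vQ 0) * Qm p.2 n (Fin.tail vQ))) * h'
    rw [Finset.sum_congr rfl e1, Finset.sum_add_distrib,
      Finset.Nat.sum_antidiagonal_succ
        (f := fun p => (p.1:ℚ) * (pPoly p.1 (vQ 0) * Qm p.2 n (Fin.tail vQ))),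
      Finset.Nat.sum_antidiagonal_succ'
        (f := fun p => (p.2:ℚ) * (pPoly p.1 (vQ 0) * Qm p.2 n (Fin.tail vQ)))]
    simp only [Nat.cast_zero, zero_mul, zero_add, add_zero]
    have eA : ∀ p ∈ Finset.HasAntidiagonal.antidiagonal k,
        ((p.1+1:ℕ):ℚ) * (pPoly (p.1+1) (vQ 0) * Qm p.2 n (Fin.tail vQ))
        = ((vQ 0 - p.1 - 1) * pPoly p.1 (vQ 0)
            + ∑ j ∈ Finset.Ico 1 (vN 0), 2*(j:ℚ) * pPoly p.1 (j:ℚ)) * Qm p.2 n (Fin.tail vQ) := by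
      intro p _
      rw [hv 0]
      push_cast
      linear_combination (Qm p.2 n (Fin.tail vQ)) * Pstring1 p.1 (vN 0)
    have eB : ∀ p ∈ Finset.HasAntidiagonal.antidiagonal k,
        ((p.2+1:ℕ):ℚ) * (pPoly p.1 (vQ 0) * Qm (p.2+1) n (Fin.tail vQ))
        = pPoly p.1 (vQ 0) * (((∑ s : Fin n, vQ s.succ) - p.2) * Qm p.2 n (Fin.tail vQ)
            + ∑ s : Fin n, ∑ j ∈ Finset.Ico 1 (vN s.succ),
                2*(j:ℚ) * Qm p.2 n (Function.update (Fin.tail vQ) s (j:ℚ))) := by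
      intro p _
      have h := ih p.2 (fun s => vN s.succ) (Fin.tail vQ) (fun i => hv i.succ)
      have hss : (∑ i : Fin n, Fin.tail vQ i) = ∑ s : Fin n, vQ s.succ := rfl
      rw [hss] at h
      push_cast
      linear_combination (pPoly p.1 (vQ 0)) * h
    rw [Finset.sum_congr rfl eA, Finset.sum_congr rfl eB]
    have hC : (∑ j ∈ Finset.Ico 1 (vN 0), 2*(j:ℚ) *
          ∑ p ∈ Finset.HasAntidiagonal.antidiagonal k, pPoly p.1 (j:ℚ) * Qm p.2 n (Fin.tail vQ))
        = ∑ p ∈ Finset.HasAntidiagonal.antidiagonal k,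
            (∑ j ∈ Finset.Ico 1 (vN 0), 2*(j:ℚ) * pPoly p.1 (j:ℚ)) * Qm p.2 n (Fin.tail vQ) := by
      simp_rw [Finset.mul_sum]
      rw [Finset.sum_comm]
      refine Finset.sum_congr rfl fun p _ => ?_
      rw [Finset.sum_mul]
      exact Finset.sum_congr rfl fun j _ => by ring
    have hD : (∑ s : Fin n, ∑ j ∈ Finset.Ico 1 (vN s.succ), 2*(j:ℚ) *
          ∑ p ∈ Finset.HasAntidiagonal.antidiagonal k, pPoly p.1 (vQ 0) * Qm p.2 n (Function.update (Fin.tail vQ) s (j:ℚ)))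
        = ∑ p ∈ Finset.HasAntidiagonal.antidiagonal k, pPoly p.1 (vQ 0) *
            ∑ s : Fin n, ∑ j ∈ Finset.Ico 1 (vN s.succ),
              2*(j:ℚ) * Qm p.2 n (Function.update (Fin.tail vQ) s (j:ℚ)) := by
      simp_rw [Finset.mul_sum]
      rw [Finset.sum_congr rfl (fun s (_ : s ∈ Finset.univ) => Finset.sum_comm), Finset.sum_comm]
      refine Finset.sum_congr rfl fun p _ => Finset.sum_congr rfl fun s _ =>
        Finset.sum_congr rfl fun j _ => by ring
    rw [hC, hD, Finset.mul_sum, ← Finset.sum_add_distrib, ← Finset.sum_add_distrib, ← Finset.sum_add_distrib]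
    refine Finset.sum_congr rfl fun p hp => ?_
    rw [Finset.HasAntidiagonal.mem_antidiagonal] at hp
    have h' : (p.1:ℚ) + (p.2:ℚ) = (k:ℚ) := by exact_mod_cast congrArg (Nat.cast : ℕ → ℚ) hp
    linear_combination (-(pPoly p.1 (vQ 0) * Qm p.2 n (Fin.tail vQ))) * h'

end Aux

/-- Dilaton equation `p_k(m_1,…,m_n,1) - p_k(m_1,…,m_n,0) = p_{k-1}(m_1,…,m_n)`
(with `p_{-1} := 0`) and string equation for the multivariate polynomials `p_k`,
the latter at nonnegative integer values of the variables. -/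
theorem stmt3 (k n : ℕ) (hn : 1 ≤ n) :
    (∀ m : Fin n → ℚ,
      pMulti k (n + 1) (Fin.snoc m 1) - pMulti k (n + 1) (Fin.snoc m 0) =
        (if k = 0 then 0 else pMulti (k - 1) n m)) ∧
    (∀ m : Fin n → ℕ,
      (k + 1 : ℚ) * pMulti (k + 1) n (fun i => (m i : ℚ)) =
        ((∑ i, (m i : ℚ)) - k - 1) * pMulti k n (fun i => (m i : ℚ)) +
          ∑ i : Fin n, ∑ j ∈ Finset.Ico 1 (m i),
            (2 * j : ℚ) * pMulti k n (Function.update (fun i => (m i : ℚ)) i (j : ℚ))) := by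
  obtain ⟨n', rfl⟩ : ∃ n', n = n' + 1 := ⟨n - 1, by omega⟩
  constructor
  · intro m
    exact DP k n' m
  · intro m
    exact PSaux n' k m (fun i => (m i : ℚ)) (fun i => rfl)
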